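/- Let G=(V,E) be a finite simple undirected graph, let (S_t) be the volume-biased evolving set process started from a nonempty set S₀ ⊆ V, and let τ be any stopping time for this process. Then Ê_{S₀}[Σ_{j=0}^{τ-1} φ(S_j)²] ≤ 4 · Ê_{S₀}[log(μ(S_τ)/μ(S₀))] ≤ 4 log μ(V). -/

import Mathlib

open scoped Classical symmDiff
set_option linter.unusedSectionVars false
set_option linter.deprecated false

noncomputable section

variable {V : Type*} [Fintype V] [DecidableEq V]

/-- The volume `μ(S)` of a set of vertices: the sum of the degrees. -/
def vol (G : SimpleGraph V) [DecidableRel G.Adj] (S : Finset V) : ℝ :=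
  ∑ x ∈ S, (G.degree x : ℝ)

/-- The number of edges leaving `S`, i.e. `∂(S) = e(S, Sᶜ)`. -/
def bdry (G : SimpleGraph V) [DecidableRel G.Adj] (S : Finset V) : ℝ :=
  ∑ x ∈ S, ((Sᶜ.filter (G.Adj x)).card : ℝ)

/-- The conductance `φ(S) = ∂(S)/μ(S)`. -/
def phiCond (G : SimpleGraph V) [DecidableRel G.Adj] (S : Finset V) : ℝ :=
  bdry G S / vol G S

/-- The lazy random walk kernel `p(x,y)`: `1/2` if `x = y`, `1/(2 d(x))` if `x ~ y`,
and `0` otherwise. -/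
def walkP (G : SimpleGraph V) [DecidableRel G.Adj] (x y : V) : ℝ :=
  if x = y then 1/2 else if G.Adj x y then 1 / (2 * (G.degree x : ℝ)) else 0

/-- `p(x,S) = Σ_{y∈S} p(x,y)`. -/
def pset (G : SimpleGraph V) [DecidableRel G.Adj] (x : V) (S : Finset V) : ℝ :=
  ∑ y ∈ S, walkP G x y

/-- One step of the evolving set process from `S` with threshold `u`:
`S₁ = {y : p(y,S) ≥ u}`. -/
def esStep (G : SimpleGraph V) [DecidableRel G.Adj] (S : Finset V) (u : ℝ) : Finset V :=
  Finset.univ.filter fun y => u ≤ pset G y S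

/-- The ESP transition kernel `K(S,S')`: the probability, for a uniform threshold
`U ∈ [0,1]`, that `{y : p(y,S) ≥ U} = S'`. -/
def Kk (G : SimpleGraph V) [DecidableRel G.Adj] (S S' : Finset V) : ℝ :=
  (MeasureTheory.volume {u : ℝ | u ∈ Set.Icc (0:ℝ) 1 ∧ esStep G S u = S'}).toReal

/-- The volume-biased ESP transition kernel `K̂(S,S') = (μ(S')/μ(S)) K(S,S')`. -/
def Khat (G : SimpleGraph V) [DecidableRel G.Adj] (S S' : Finset V) : ℝ :=
  vol G S' / vol G S * Kk G S S'

/-- Expectation of a path functional `f` (depending only on coordinates `0, …, T`)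
over length-`(T+1)` sample paths of the Markov chain with transition kernel `κ`
started at `S₀`; the finite path is extended to an infinite one by freezing it
after time `T`. -/
def EpathN (κ : Finset V → Finset V → ℝ) (S₀ : Finset V) (T : ℕ)
    (f : (ℕ → Finset V) → ℝ) : ℝ :=
  ∑ w : Fin (T+1) → Finset V,
    if w 0 = S₀ then
      (∏ j : Fin T, κ (w j.castSucc) (w j.succ)) *
        f (fun n => w ⟨min n T, Nat.lt_succ_of_le (min_le_right n T)⟩)
    else 0

/-- `τ` is a stopping time for the natural filtration: the event `τ = n` depends only
on the first `n+1` coordinates of the path. -/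
def IsStopping (τ : (ℕ → Finset V) → ℕ) : Prop :=
  ∀ (s s' : ℕ → Finset V) (n : ℕ), τ s = n → (∀ i ≤ n, s' i = s i) → τ s' = n

-- ==================== Stage 1: basic lemmas ====================
section Basics
variable (G : SimpleGraph V) [DecidableRel G.Adj]

/-- number of neighbors of `x` inside `S`, as a real -/
def nb (x : V) (S : Finset V) : ℝ := ((S.filter (G.Adj x)).card : ℝ)

variable {G}

lemma nb_nonneg (x : V) (S : Finset V) : 0 ≤ nb G x S := Nat.cast_nonneg _

lemma nb_le_degree (x : V) (S : Finset V) : nb G x S ≤ (G.degree x : ℝ) := by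
  have h : S.filter (G.Adj x) ⊆ G.neighborFinset x := by
    intro y hy
    rw [SimpleGraph.mem_neighborFinset]
    exact (Finset.mem_filter.1 hy).2
  exact_mod_cast Nat.cast_le.2 (Finset.card_le_card h)

lemma nb_zero_of_degree_zero {x : V} (h : G.degree x = 0) (S : Finset V) : nb G x S = 0 := by
  have := nb_le_degree (G := G) x S
  have h0 := nb_nonneg (G := G) x S
  rw [h] at this
  push_cast at this
  linarith

lemma nb_add_nb_compl (x : V) (S : Finset V) :
    nb G x S + nb G x Sᶜ = (G.degree x : ℝ) := by
  unfold nb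
  rw [← Nat.cast_add]
  norm_cast
  rw [← Finset.card_union_of_disjoint]
  · congr 1
    rw [SimpleGraph.neighborFinset_eq_filter, ← Finset.filter_union, Finset.union_compl]
  · exact Finset.disjoint_filter_filter (disjoint_compl_right)

lemma bdry_eq_sum_compl (S : Finset V) : bdry G S = ∑ y ∈ Sᶜ, nb G y S := by
  unfold bdry nb
  push_cast [Finset.card_filter]
  rw [Finset.sum_comm' (t' := Sᶜ) (s' := fun _ => S)]
  · apply Finset.sum_congr rfl
    intro y _
    apply Finset.sum_congr rfl
    intro x _
    simp [G.adj_comm x y]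
  · intro x y
    tauto

lemma sum_nb_self (S : Finset V) : ∑ y ∈ S, nb G y S = vol G S - bdry G S := by
  have h : ∀ y ∈ S, nb G y S = (G.degree y : ℝ) - nb G y Sᶜ := by
    intro y _
    have := nb_add_nb_compl (G := G) y S
    linarith
  rw [Finset.sum_congr rfl h, Finset.sum_sub_distrib]
  rfl

lemma vol_nonneg (S : Finset V) : 0 ≤ vol G S :=
  Finset.sum_nonneg fun _ _ => Nat.cast_nonneg _

lemma bdry_nonneg (S : Finset V) : 0 ≤ bdry G S :=
  Finset.sum_nonneg fun _ _ => Nat.cast_nonneg _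

lemma bdry_le_vol (S : Finset V) : bdry G S ≤ vol G S :=
  Finset.sum_le_sum fun x _ => nb_le_degree x Sᶜ

lemma vol_le_vol_univ (S : Finset V) : vol G S ≤ vol G Finset.univ :=
  Finset.sum_le_sum_of_subset_of_nonneg (Finset.subset_univ S)
    (fun _ _ _ => Nat.cast_nonneg _)

lemma vol_eq_nat (S : Finset V) : vol G S = ((∑ x ∈ S, G.degree x : ℕ) : ℝ) := by
  unfold vol; push_cast; rfl

lemma one_le_vol {S : Finset V} (h : vol G S ≠ 0) : 1 ≤ vol G S := by
  rw [vol_eq_nat] at *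
  have : (∑ x ∈ S, G.degree x) ≠ 0 := by exact_mod_cast h
  exact_mod_cast Nat.one_le_iff_ne_zero.2 this

lemma phi_nonneg (S : Finset V) : 0 ≤ phiCond G S :=
  div_nonneg (bdry_nonneg S) (vol_nonneg S)

lemma phi_le_one (S : Finset V) : phiCond G S ≤ 1 := by
  unfold phiCond
  rcases eq_or_lt_of_le (vol_nonneg (G := G) S) with h | h
  · rw [← h]; simp
  · exact div_le_one_of_le₀ (bdry_le_vol S) (le_of_lt h)

lemma walkP_nonneg (x y : V) : 0 ≤ walkP G x y := by
  unfold walkP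
  split
  · norm_num
  · split
    · positivity
    · exact le_refl 0

lemma pset_eq (x : V) (S : Finset V) :
    pset G x S = (if x ∈ S then (1:ℝ)/2 else 0) + nb G x S / (2 * (G.degree x : ℝ)) := by
  unfold pset
  have hp : ∀ y, walkP G x y =
      (if y = x then (1:ℝ)/2 else 0) + (if G.Adj x y then 1/(2*(G.degree x:ℝ)) else 0) := by
    intro y
    unfold walkP
    by_cases h : x = y
    · subst h; simp [G.irrefl]
    · simp [h, Ne.symm h]
  rw [Finset.sum_congr rfl fun y _ => hp y, Finset.sum_add_distrib,
    Finset.sum_ite_eq' S x (fun _ => (1:ℝ)/2)]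
  congr 1
  rw [Finset.sum_ite, Finset.sum_const_zero, add_zero, Finset.sum_const, nsmul_eq_mul,
    mul_one_div]
  rfl

lemma pset_nonneg (x : V) (S : Finset V) : 0 ≤ pset G x S :=
  Finset.sum_nonneg fun y _ => walkP_nonneg x y

lemma nb_div_le_half (x : V) (S : Finset V) : nb G x S / (2 * (G.degree x : ℝ)) ≤ 1/2 := by
  rcases eq_or_ne (G.degree x) 0 with h | h
  · rw [nb_zero_of_degree_zero h]; norm_num
  · have hd : (0:ℝ) < G.degree x := by exact_mod_cast Nat.pos_of_ne_zero h
    rw [div_le_iff₀ (by linarith)]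
    have := nb_le_degree (G := G) x S
    linarith

lemma nb_div_nonneg (x : V) (S : Finset V) : 0 ≤ nb G x S / (2 * (G.degree x : ℝ)) := by
  apply div_nonneg (nb_nonneg x S); positivity

lemma pset_le_one (x : V) (S : Finset V) : pset G x S ≤ 1 := by
  rw [pset_eq]
  have := nb_div_le_half (G := G) x S
  split <;> linarith

lemma pset_mem {x : V} {S : Finset V} (h : x ∈ S) :
    pset G x S = 1/2 + nb G x S / (2 * (G.degree x : ℝ)) := by rw [pset_eq]; simp [h]

lemma pset_not_mem {x : V} {S : Finset V} (h : x ∉ S) :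
    pset G x S = nb G x S / (2 * (G.degree x : ℝ)) := by rw [pset_eq]; simp [h]

lemma dy_mul_min (y : V) (S : Finset V) :
    (G.degree y : ℝ) * min (1/2) (pset G y S) =
      (if y ∈ S then (G.degree y : ℝ)/2 else nb G y S / 2) := by
  by_cases h : y ∈ S
  · rw [pset_mem h, min_eq_left (by have := nb_div_nonneg (G := G) y S; linarith)]
    simp [h]; ring
  · rw [pset_not_mem h, min_eq_right (nb_div_le_half y S)]
    simp only [h, if_false]
    rcases eq_or_ne (G.degree y) 0 with hd | hd
    · rw [nb_zero_of_degree_zero hd]; simp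
    · have hd' : (G.degree y : ℝ) ≠ 0 := Nat.cast_ne_zero.2 hd
      field_simp

lemma dy_mul_max (y : V) (S : Finset V) :
    (G.degree y : ℝ) * max (pset G y S - 1/2) 0 =
      (if y ∈ S then nb G y S / 2 else 0) := by
  by_cases h : y ∈ S
  · rw [pset_mem h]
    simp only [h, if_true, add_sub_cancel_left]
    rw [max_eq_left (nb_div_nonneg y S)]
    rcases eq_or_ne (G.degree y) 0 with hd | hd
    · rw [nb_zero_of_degree_zero hd]; simp
    · have hd' : (G.degree y : ℝ) ≠ 0 := Nat.cast_ne_zero.2 hd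
      field_simp
  · rw [pset_not_mem h]
    simp only [h, if_false]
    rw [max_eq_right (by have := nb_div_le_half (G := G) y S; linarith), mul_zero]

end Basics

-- ==================== Stage 2: measure computations ====================
section MeasureSec
open MeasureTheory Set
variable {G : SimpleGraph V} [DecidableRel G.Adj]

lemma mem_esStep {u : ℝ} {y : V} {S : Finset V} :
    y ∈ esStep G S u ↔ u ≤ pset G y S := by simp [esStep]

lemma measurable_esStep_eq (S S' : Finset V) :
    MeasurableSet {u : ℝ | esStep G S u = S'} := by
  have h : {u : ℝ | esStep G S u = S'} = ⋂ y : V, {u : ℝ | u ≤ pset G y S ↔ y ∈ S'} := by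
    ext u
    simp [Set.mem_iInter, Finset.ext_iff, mem_esStep]
  rw [h]
  apply MeasurableSet.iInter
  intro y
  by_cases hy : y ∈ S'
  · simp only [hy, iff_true]
    exact measurableSet_Iic
  · simp only [hy, iff_false, not_le]
    exact measurableSet_Ioi

/-- Conditional kernel restricted to thresholds in `C`. -/
def KkC (G : SimpleGraph V) [DecidableRel G.Adj] (C : Set ℝ) (S S' : Finset V) : ℝ :=
  (volume (C ∩ {u | esStep G S u = S'})).toReal

lemma KkC_nonneg (C : Set ℝ) (S S' : Finset V) : 0 ≤ KkC G C S S' := ENNReal.toReal_nonneg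

lemma Kk_eq_KkC (S S' : Finset V) : Kk G S S' = KkC G (Icc 0 1) S S' := rfl

lemma sum_toReal_measure_q (S : Finset V) (C : Set ℝ) (hC : MeasurableSet C)
    (hfin : volume C ≠ ⊤) (q : Finset V → Prop) [DecidablePred q] :
    ∑ S' : Finset V, KkC G C S S' * (if q S' then 1 else 0)
      = (volume (C ∩ {u | q (esStep G S u)})).toReal := by
  have hdis : (↑(Finset.univ.filter q) : Set (Finset V)).PairwiseDisjoint
      (fun S' => C ∩ {u : ℝ | esStep G S u = S'}) := by
    intro a _ b _ hab
    apply Set.disjoint_left.2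
    rintro u ⟨_, hua⟩ ⟨_, hub⟩
    exact hab (by rw [Set.mem_setOf_eq] at hua hub; rw [← hua, hub])
  have hmeas : ∀ b ∈ Finset.univ.filter q, MeasurableSet (C ∩ {u : ℝ | esStep G S u = b}) :=
    fun b _ => hC.inter (measurable_esStep_eq S b)
  have hunion : (⋃ S' ∈ Finset.univ.filter q, C ∩ {u : ℝ | esStep G S u = S'})
      = C ∩ {u | q (esStep G S u)} := by
    ext u
    simp only [Set.mem_iUnion, Finset.mem_filter, Finset.mem_univ, true_and,
      Set.mem_inter_iff, Set.mem_setOf_eq]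
    constructor
    · rintro ⟨S', hq, hu, he⟩; exact ⟨hu, he ▸ hq⟩
    · rintro ⟨hu, hq⟩; exact ⟨esStep G S u, hq, hu, rfl⟩
  have hite : ∀ S' : Finset V, KkC G C S S' * (if q S' then 1 else 0)
      = if q S' then KkC G C S S' else 0 := by
    intro S'; split <;> simp
  rw [Finset.sum_congr rfl (fun S' _ => hite S'), ← Finset.sum_filter]
  unfold KkC
  rw [← ENNReal.toReal_sum (fun a _ => ne_top_of_le_ne_top hfin
      (measure_mono Set.inter_subset_left)),
    ← measure_biUnion_finset hdis hmeas, hunion]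

lemma sum_KkC_const (S : Finset V) (C : Set ℝ) (hC : MeasurableSet C)
    (hfin : volume C ≠ ⊤) :
    ∑ S' : Finset V, KkC G C S S' = (volume C).toReal := by
  have := sum_toReal_measure_q (G := G) S C hC hfin (fun _ => True)
  simp only [if_true, mul_one] at this
  rw [this]
  congr 1
  simp

lemma sum_KkC_vol (S : Finset V) (C : Set ℝ) (hC : MeasurableSet C)
    (hfin : volume C ≠ ⊤) :
    ∑ S' : Finset V, KkC G C S S' * vol G S'
      = ∑ y : V, (G.degree y : ℝ) * (volume (C ∩ Iic (pset G y S))).toReal := by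
  have hv : ∀ S' : Finset V, vol G S' = ∑ y : V, (G.degree y : ℝ) * (if y ∈ S' then 1 else 0) := by
    intro S'
    rw [Finset.sum_congr rfl (fun y _ => by
      rw [mul_ite, mul_one, mul_zero] : ∀ y ∈ Finset.univ,
        (G.degree y : ℝ) * (if y ∈ S' then 1 else 0) = if y ∈ S' then (G.degree y:ℝ) else 0)]
    rw [Finset.sum_ite_mem, Finset.univ_inter]
    rfl
  calc ∑ S' : Finset V, KkC G C S S' * vol G S'
      = ∑ S' : Finset V, ∑ y : V, (G.degree y : ℝ) * (KkC G C S S' * (if y ∈ S' then 1 else 0)) := by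
        apply Finset.sum_congr rfl; intro S' _
        rw [hv S', Finset.mul_sum]
        apply Finset.sum_congr rfl; intro y _; ring
    _ = ∑ y : V, (G.degree y : ℝ) * ∑ S' : Finset V, KkC G C S S' * (if y ∈ S' then 1 else 0) := by
        rw [Finset.sum_comm]
        apply Finset.sum_congr rfl; intro y _
        rw [Finset.mul_sum]
    _ = ∑ y : V, (G.degree y : ℝ) * (volume (C ∩ Iic (pset G y S))).toReal := by
        apply Finset.sum_congr rfl; intro y _
        rw [sum_toReal_measure_q (G := G) S C hC hfin (fun S' => y ∈ S')]
        have hset : {u : ℝ | y ∈ esStep G S u} = Iic (pset G y S) := by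
          ext u; simp [mem_esStep, Set.mem_Iic]
        rw [hset]

end MeasureSec

-- ==================== Stage 2b: explicit kernel sums ====================
section KernelSums
open MeasureTheory Set
variable {G : SimpleGraph V} [DecidableRel G.Adj]

lemma volume_Icc_ne_top {a b : ℝ} : volume (Icc a b) ≠ ⊤ := by
  rw [Real.volume_Icc]; exact ENNReal.ofReal_ne_top

lemma volume_Ioc_ne_top {a b : ℝ} : volume (Ioc a b) ≠ ⊤ := by
  rw [Real.volume_Ioc]; exact ENNReal.ofReal_ne_top

lemma measure_Cm_Iic {p : ℝ} (hp : 0 ≤ p) :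
    (volume (Icc (0:ℝ) (1/2) ∩ Iic p)).toReal = min (1/2) p := by
  have h : Icc (0:ℝ) (1/2) ∩ Iic p = Icc 0 (min (1/2) p) := by
    ext u
    simp only [Set.mem_inter_iff, Set.mem_Icc, Set.mem_Iic, le_min_iff]
    tauto
  rw [h, Real.volume_Icc, sub_zero, ENNReal.toReal_ofReal (le_min (by norm_num) hp)]

lemma measure_Cp_Iic {p : ℝ} (hp1 : p ≤ 1) :
    (volume (Ioc (1/2:ℝ) 1 ∩ Iic p)).toReal = max (p - 1/2) 0 := by
  have h : Ioc (1/2:ℝ) 1 ∩ Iic p = Ioc (1/2) p := by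
    ext u
    simp only [Set.mem_inter_iff, Set.mem_Ioc, Set.mem_Iic]
    constructor
    · rintro ⟨⟨h1, _⟩, h3⟩; exact ⟨h1, h3⟩
    · rintro ⟨h1, h2⟩; exact ⟨⟨h1, le_trans h2 hp1⟩, h2⟩
  rw [h, Real.volume_Ioc, ENNReal.toReal_ofReal']

lemma sum_KkCm_one (S : Finset V) :
    ∑ S' : Finset V, KkC G (Icc 0 (1/2)) S S' = 1/2 := by
  rw [sum_KkC_const S _ measurableSet_Icc volume_Icc_ne_top, Real.volume_Icc, sub_zero,
    ENNReal.toReal_ofReal (by norm_num)]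

lemma sum_KkCp_one (S : Finset V) :
    ∑ S' : Finset V, KkC G (Ioc (1/2) 1) S S' = 1/2 := by
  rw [sum_KkC_const S _ measurableSet_Ioc volume_Ioc_ne_top, Real.volume_Ioc,
    ENNReal.toReal_ofReal (by norm_num)]
  norm_num

lemma sum_KkCm_vol (S : Finset V) :
    ∑ S' : Finset V, KkC G (Icc 0 (1/2)) S S' * vol G S' = (vol G S + bdry G S) / 2 := by
  rw [sum_KkC_vol S _ measurableSet_Icc volume_Icc_ne_top]
  have h1 : ∀ y : V, (G.degree y : ℝ) * (volume (Icc (0:ℝ) (1/2) ∩ Iic (pset G y S))).toReal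
      = (if y ∈ S then (G.degree y : ℝ)/2 else nb G y S / 2) := by
    intro y
    rw [measure_Cm_Iic (pset_nonneg y S), dy_mul_min]
  rw [Finset.sum_congr rfl fun y _ => h1 y, ← Finset.sum_add_sum_compl S]
  have h2 : ∑ y ∈ S, (if y ∈ S then (G.degree y : ℝ)/2 else nb G y S / 2)
      = vol G S / 2 := by
    rw [Finset.sum_congr rfl fun y hy => if_pos hy, ← Finset.sum_div]; rfl
  have h3 : ∑ y ∈ Sᶜ, (if y ∈ S then (G.degree y : ℝ)/2 else nb G y S / 2)
      = bdry G S / 2 := by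
    rw [Finset.sum_congr rfl fun y hy => if_neg (Finset.mem_compl.1 hy), ← Finset.sum_div,
      ← bdry_eq_sum_compl]
  rw [h2, h3]
  ring

lemma sum_KkCp_vol (S : Finset V) :
    ∑ S' : Finset V, KkC G (Ioc (1/2) 1) S S' * vol G S' = (vol G S - bdry G S) / 2 := by
  rw [sum_KkC_vol S _ measurableSet_Ioc volume_Ioc_ne_top]
  have h1 : ∀ y : V, (G.degree y : ℝ) * (volume (Ioc (1/2:ℝ) 1 ∩ Iic (pset G y S))).toReal
      = (if y ∈ S then nb G y S / 2 else 0) := by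
    intro y
    rw [measure_Cp_Iic (pset_le_one y S), dy_mul_max]
  rw [Finset.sum_congr rfl fun y _ => h1 y, Finset.sum_ite_mem, Finset.univ_inter,
    ← Finset.sum_div, sum_nb_self]

lemma Kk_split (S S' : Finset V) :
    Kk G S S' = KkC G (Icc 0 (1/2)) S S' + KkC G (Ioc (1/2) 1) S S' := by
  rw [Kk_eq_KkC]
  unfold KkC
  have hu : (Icc (0:ℝ) 1) = Icc (0:ℝ) (1/2) ∪ Ioc (1/2) 1 :=
    (Set.Icc_union_Ioc_eq_Icc (by norm_num) (by norm_num)).symm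
  have hdis : Disjoint (Icc (0:ℝ) (1/2) ∩ {u | esStep G S u = S'})
      (Ioc (1/2:ℝ) 1 ∩ {u | esStep G S u = S'}) := by
    apply Disjoint.mono Set.inter_subset_left Set.inter_subset_left
    apply Set.disjoint_left.2
    rintro u ⟨_, h2⟩ ⟨h3, _⟩
    exact absurd h2 (not_le.2 h3)
  rw [hu, Set.union_inter_distrib_right,
    measure_union hdis (measurableSet_Ioc.inter (measurable_esStep_eq S S')),
    ENNReal.toReal_add (ne_top_of_le_ne_top volume_Icc_ne_top (measure_mono Set.inter_subset_left))
      (ne_top_of_le_ne_top volume_Ioc_ne_top (measure_mono Set.inter_subset_left))]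

lemma Kk_nonneg (S S' : Finset V) : 0 ≤ Kk G S S' := ENNReal.toReal_nonneg

lemma sum_Kk_one (S : Finset V) : ∑ S' : Finset V, Kk G S S' = 1 := by
  rw [Finset.sum_congr rfl fun S' _ => Kk_split S S', Finset.sum_add_distrib,
    sum_KkCm_one, sum_KkCp_one]
  norm_num

lemma sum_Kk_vol (S : Finset V) :
    ∑ S' : Finset V, Kk G S S' * vol G S' = vol G S := by
  have h : ∀ S' : Finset V, Kk G S S' * vol G S'
      = KkC G (Icc 0 (1/2)) S S' * vol G S' + KkC G (Ioc (1/2) 1) S S' * vol G S' := by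
    intro S'; rw [Kk_split, add_mul]
  rw [Finset.sum_congr rfl fun S' _ => h S', Finset.sum_add_distrib,
    sum_KkCm_vol, sum_KkCp_vol]
  ring

lemma Khat_nonneg (S S' : Finset V) : 0 ≤ Khat G S S' := by
  unfold Khat
  exact mul_nonneg (div_nonneg (vol_nonneg S') (vol_nonneg S)) (Kk_nonneg S S')

lemma Khat_eq_zero_of_vol_zero {S' : Finset V} (S : Finset V) (h : vol G S' = 0) :
    Khat G S S' = 0 := by unfold Khat; rw [h, zero_div, zero_mul]

lemma sum_Khat_one {S : Finset V} (h : vol G S ≠ 0) :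
    ∑ S' : Finset V, Khat G S S' = 1 := by
  unfold Khat
  have : ∀ S' : Finset V, vol G S' / vol G S * Kk G S S' = (Kk G S S' * vol G S') / vol G S := by
    intro S'; ring
  rw [Finset.sum_congr rfl fun S' _ => this S', ← Finset.sum_div, sum_Kk_vol, div_self h]

end KernelSums

-- ==================== Stage 3: the drift lemma ====================
section Drift
open MeasureTheory Set
variable {G : SimpleGraph V} [DecidableRel G.Adj]

lemma cs_bound (S : Finset V) (C : Set ℝ) (c e : ℝ) (hc : 0 ≤ c)
    (hsum1 : ∑ S' : Finset V, KkC G C S S' = c)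
    (hsum2 : ∑ S' : Finset V, KkC G C S S' * vol G S' = e) (hv : 0 < vol G S) :
    ∑ S' : Finset V, KkC G C S S' * Real.sqrt (vol G S' / vol G S)
      ≤ Real.sqrt (c * (e / vol G S)) := by
  set m := ∑ S' : Finset V, KkC G C S S' * Real.sqrt (vol G S' / vol G S) with hm
  have hterm : ∀ S' : Finset V, KkC G C S S' * Real.sqrt (vol G S' / vol G S)
      = Real.sqrt (KkC G C S S') * Real.sqrt (KkC G C S S' * (vol G S' / vol G S)) := by
    intro S'
    rw [← Real.sqrt_mul (KkC_nonneg C S S'), ← mul_assoc,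
      Real.sqrt_mul (mul_nonneg (KkC_nonneg C S S') (KkC_nonneg C S S')),
      Real.sqrt_mul_self (KkC_nonneg C S S')]
  have hmnn : 0 ≤ m := Finset.sum_nonneg fun S' _ => mul_nonneg (KkC_nonneg C S S')
    (Real.sqrt_nonneg _)
  have hcs := Finset.sum_mul_sq_le_sq_mul_sq Finset.univ
    (fun S' => Real.sqrt (KkC G C S S'))
    (fun S' => Real.sqrt (KkC G C S S' * (vol G S' / vol G S)))
  have hf2 : ∑ S' : Finset V, Real.sqrt (KkC G C S S') ^ 2 = c := by
    rw [← hsum1]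
    exact Finset.sum_congr rfl fun S' _ => Real.sq_sqrt (KkC_nonneg C S S')
  have hg2 : ∑ S' : Finset V, Real.sqrt (KkC G C S S' * (vol G S' / vol G S)) ^ 2
      = e / vol G S := by
    have : ∀ S' : Finset V, Real.sqrt (KkC G C S S' * (vol G S' / vol G S)) ^ 2
        = KkC G C S S' * vol G S' / vol G S := by
      intro S'
      rw [Real.sq_sqrt (mul_nonneg (KkC_nonneg C S S')
        (div_nonneg (vol_nonneg S') (le_of_lt hv))), mul_div_assoc]
    rw [Finset.sum_congr rfl fun S' _ => this S', ← Finset.sum_div, hsum2]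
  have hmsq : m ^ 2 ≤ c * (e / vol G S) := by
    calc m ^ 2 = (∑ S' : Finset V, Real.sqrt (KkC G C S S')
        * Real.sqrt (KkC G C S S' * (vol G S' / vol G S))) ^ 2 := by
          rw [hm, Finset.sum_congr rfl fun S' _ => hterm S']
      _ ≤ c * (e / vol G S) := by rw [← hf2, ← hg2]; exact hcs
  calc m = Real.sqrt (m ^ 2) := (Real.sqrt_sq hmnn).symm
    _ ≤ Real.sqrt (c * (e / vol G S)) := Real.sqrt_le_sqrt hmsq

lemma sqrt_sum_bound {S : Finset V} (hv : 0 < vol G S) :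
    ∑ S' : Finset V, Kk G S S' * Real.sqrt (vol G S' / vol G S)
      ≤ 1 - phiCond G S ^ 2 / 8 := by
  set φ := phiCond G S with hφ
  have hφ0 : 0 ≤ φ := phi_nonneg S
  have hφ1 : φ ≤ 1 := phi_le_one S
  have hbd : bdry G S = φ * vol G S := by
    rw [hφ]; unfold phiCond; field_simp
  have hsplit : ∀ S' : Finset V, Kk G S S' * Real.sqrt (vol G S' / vol G S)
      = KkC G (Icc 0 (1/2)) S S' * Real.sqrt (vol G S' / vol G S)
        + KkC G (Ioc (1/2) 1) S S' * Real.sqrt (vol G S' / vol G S) := by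
    intro S'; rw [Kk_split, add_mul]
  rw [Finset.sum_congr rfl fun S' _ => hsplit S', Finset.sum_add_distrib]
  have sqrt4 : Real.sqrt 4 = 2 := by
    rw [show (4:ℝ) = 2^2 by norm_num, Real.sqrt_sq (by norm_num)]
  have h1 : ∑ S' : Finset V, KkC G (Icc 0 (1/2)) S S' * Real.sqrt (vol G S' / vol G S)
      ≤ Real.sqrt (1 + φ) / 2 := by
    have hb := cs_bound S (Icc 0 (1/2)) (1/2) ((vol G S + bdry G S)/2) (by norm_num)
      (sum_KkCm_one S) (sum_KkCm_vol S) hv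
    have harg : (1/2 : ℝ) * ((vol G S + bdry G S)/2 / vol G S) = (1 + φ)/4 := by
      rw [hbd]; field_simp; ring
    rw [harg] at hb
    calc _ ≤ Real.sqrt ((1 + φ)/4) := hb
      _ = Real.sqrt (1 + φ) / 2 := by
          rw [Real.sqrt_div (by linarith) 4, sqrt4]
  have h2 : ∑ S' : Finset V, KkC G (Ioc (1/2) 1) S S' * Real.sqrt (vol G S' / vol G S)
      ≤ Real.sqrt (1 - φ) / 2 := by
    have hb := cs_bound S (Ioc (1/2) 1) (1/2) ((vol G S - bdry G S)/2) (by norm_num)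
      (sum_KkCp_one S) (sum_KkCp_vol S) hv
    have harg : (1/2 : ℝ) * ((vol G S - bdry G S)/2 / vol G S) = (1 - φ)/4 := by
      rw [hbd]; field_simp; ring
    rw [harg] at hb
    calc _ ≤ Real.sqrt ((1 - φ)/4) := hb
      _ = Real.sqrt (1 - φ) / 2 := by
          rw [Real.sqrt_div (by linarith) 4, sqrt4]
  have hfinal : Real.sqrt (1 + φ) / 2 + Real.sqrt (1 - φ) / 2 ≤ 1 - φ ^ 2 / 8 := by
    set A := Real.sqrt (1 + φ) with hA
    set B := Real.sqrt (1 - φ) with hB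
    have hA0 : 0 ≤ A := Real.sqrt_nonneg _
    have hB0 : 0 ≤ B := Real.sqrt_nonneg _
    have hA2 : A ^ 2 = 1 + φ := Real.sq_sqrt (by linarith)
    have hB2 : B ^ 2 = 1 - φ := Real.sq_sqrt (by linarith)
    have hABsq : (A * B) ^ 2 = 1 - φ ^ 2 := by
      have : (A * B) ^ 2 = A ^ 2 * B ^ 2 := by ring
      rw [this, hA2, hB2]; ring
    have hABle : A * B ≤ 1 - φ ^ 2 / 2 := by
      nlinarith [mul_nonneg hA0 hB0, sq_nonneg φ, sq_nonneg (φ^2)]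
    have hsq : (A + B) ^ 2 ≤ (2 - φ ^ 2 / 4) ^ 2 := by nlinarith [sq_nonneg φ, sq_nonneg (φ^2)]
    have hAB : A + B ≤ 2 - φ ^ 2 / 4 := by
      calc A + B = Real.sqrt ((A + B) ^ 2) := (Real.sqrt_sq (by linarith)).symm
        _ ≤ Real.sqrt ((2 - φ ^ 2 / 4) ^ 2) := Real.sqrt_le_sqrt hsq
        _ = 2 - φ ^ 2 / 4 := Real.sqrt_sq (by nlinarith)
    linarith
  linarith [h1, h2, hfinal]

lemma sum_Kk_r_one {S : Finset V} (hv : 0 < vol G S) :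
    ∑ S' : Finset V, Kk G S S' * (vol G S' / vol G S) = 1 := by
  have h : ∀ S' : Finset V, Kk G S S' * (vol G S' / vol G S)
      = Kk G S S' * vol G S' / vol G S := fun S' => by ring
  rw [Finset.sum_congr rfl fun S' _ => h S', ← Finset.sum_div, sum_Kk_vol,
    div_self (ne_of_gt hv)]

lemma m_pos {S : Finset V} (hv : 0 < vol G S) :
    0 < ∑ S' : Finset V, Kk G S S' * Real.sqrt (vol G S' / vol G S) := by
  set m := ∑ S' : Finset V, Kk G S S' * Real.sqrt (vol G S' / vol G S) with hm
  have hnn : ∀ S' : Finset V, 0 ≤ Kk G S S' * Real.sqrt (vol G S' / vol G S) :=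
    fun S' => mul_nonneg (Kk_nonneg S S') (Real.sqrt_nonneg _)
  rcases lt_or_eq_of_le (Finset.sum_nonneg fun S' _ => hnn S') with h | h
  · exact h
  · exfalso
    have hall : ∀ S' ∈ Finset.univ, Kk G S S' * Real.sqrt (vol G S' / vol G S) = 0 :=
      (Finset.sum_eq_zero_iff_of_nonneg fun S' _ => hnn S').1 h.symm
    have hzero : ∀ S' : Finset V, Kk G S S' * (vol G S' / vol G S) = 0 := by
      intro S'
      have h1 := hall S' (Finset.mem_univ S')
      have h2 : vol G S' / vol G S
          = Real.sqrt (vol G S' / vol G S) * Real.sqrt (vol G S' / vol G S) :=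
        (Real.mul_self_sqrt (div_nonneg (vol_nonneg S') (le_of_lt hv))).symm
      rw [h2, ← mul_assoc, h1, zero_mul]
    have := sum_Kk_r_one (G := G) hv
    rw [Finset.sum_congr rfl fun S' _ => hzero S', Finset.sum_const_zero] at this
    norm_num at this

lemma khat_sqrt_identity {S : Finset V} (hv : 0 < vol G S) (S' : Finset V) :
    Khat G S S' * Real.sqrt (vol G S / vol G S')
      = Kk G S S' * Real.sqrt (vol G S' / vol G S) := by
  rcases eq_or_lt_of_le (vol_nonneg (G := G) S') with h0 | h0
  · rw [Khat_eq_zero_of_vol_zero S h0.symm, zero_mul, ← h0, zero_div, Real.sqrt_zero, mul_zero]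
  · unfold Khat
    have hsv : Real.sqrt (vol G S) ≠ 0 := ne_of_gt (Real.sqrt_pos.2 hv)
    have hsv' : Real.sqrt (vol G S') ≠ 0 := ne_of_gt (Real.sqrt_pos.2 h0)
    rw [Real.sqrt_div (le_of_lt hv), Real.sqrt_div (vol_nonneg S')]
    have hms : Real.sqrt (vol G S) * Real.sqrt (vol G S) = vol G S :=
      Real.mul_self_sqrt (le_of_lt hv)
    have hms' : Real.sqrt (vol G S') * Real.sqrt (vol G S') = vol G S' :=
      Real.mul_self_sqrt (le_of_lt h0)
    field_simp
    linear_combination (vol G S' * Kk G S S') * hms - (vol G S * Kk G S S') * hms'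

lemma drift_main {S : Finset V} (hv : 0 < vol G S) :
    phiCond G S ^ 2 / 4 ≤ ∑ S' : Finset V, Khat G S S' * Real.log (vol G S' / vol G S) := by
  set m := ∑ S' : Finset V, Kk G S S' * Real.sqrt (vol G S' / vol G S) with hm
  have hmpos : 0 < m := m_pos hv
  have hmle : m ≤ 1 - phiCond G S ^ 2 / 8 := sqrt_sum_bound hv
  -- Jensen via log x ≤ x - 1
  have hsumKhat : ∑ S' : Finset V, Khat G S S' = 1 := sum_Khat_one (ne_of_gt hv)
  have hjensen : ∑ S' : Finset V, Khat G S S' * Real.log (Real.sqrt (vol G S / vol G S'))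
      ≤ Real.log m := by
    have hstep : ∀ S' : Finset V,
        Khat G S S' * (Real.log (Real.sqrt (vol G S / vol G S')) - Real.log m)
          ≤ Khat G S S' * (Real.sqrt (vol G S / vol G S') / m - 1) := by
      intro S'
      rcases eq_or_lt_of_le (Khat_nonneg (G := G) S S') with h0 | h0
      · rw [← h0, zero_mul, zero_mul]
      · have hv' : 0 < vol G S' := by
          rcases eq_or_lt_of_le (vol_nonneg (G := G) S') with h1 | h1
          · exfalso; exact (ne_of_gt h0) (Khat_eq_zero_of_vol_zero S h1.symm)
          · exact h1
        have hx : 0 < Real.sqrt (vol G S / vol G S') :=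
          Real.sqrt_pos.2 (div_pos hv hv')
        apply mul_le_mul_of_nonneg_left _ (le_of_lt h0)
        rw [← Real.log_div (ne_of_gt hx) (ne_of_gt hmpos)]
        exact Real.log_le_sub_one_of_pos (div_pos hx hmpos)
    have hsum := Finset.sum_le_sum fun S' (_ : S' ∈ Finset.univ) => hstep S'
    have hlhs : ∑ S' : Finset V,
        Khat G S S' * (Real.log (Real.sqrt (vol G S / vol G S')) - Real.log m)
        = (∑ S' : Finset V, Khat G S S' * Real.log (Real.sqrt (vol G S / vol G S')))
          - Real.log m := by
      rw [Finset.sum_congr rfl fun S' _ => mul_sub (Khat G S S') _ _, Finset.sum_sub_distrib,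
        ← Finset.sum_mul, hsumKhat, one_mul]
    have hrhs : ∑ S' : Finset V, Khat G S S' * (Real.sqrt (vol G S / vol G S') / m - 1) = 0 := by
      have hexp : ∀ S' : Finset V, Khat G S S' * (Real.sqrt (vol G S / vol G S') / m - 1)
          = (Khat G S S' * Real.sqrt (vol G S / vol G S')) / m - Khat G S S' := by
        intro S'; ring
      rw [Finset.sum_congr rfl fun S' _ => hexp S', Finset.sum_sub_distrib,
        Finset.sum_congr rfl fun S' _ => by rw [khat_sqrt_identity hv S'],
        ← Finset.sum_div, ← hm, div_self (ne_of_gt hmpos), hsumKhat]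
      norm_num
    rw [hlhs, hrhs] at hsum
    linarith
  -- convert to the statement
  have hconv : ∀ S' : Finset V, Khat G S S' * Real.log (vol G S' / vol G S)
      = (-2) * (Khat G S S' * Real.log (Real.sqrt (vol G S / vol G S'))) := by
    intro S'
    rcases eq_or_lt_of_le (Khat_nonneg (G := G) S S') with h0 | h0
    · rw [← h0]; ring
    · have hv' : 0 < vol G S' := by
        rcases eq_or_lt_of_le (vol_nonneg (G := G) S') with h1 | h1
        · exfalso; exact (ne_of_gt h0) (Khat_eq_zero_of_vol_zero S h1.symm)
        · exact h1
      rw [Real.log_sqrt (div_nonneg (le_of_lt hv) (le_of_lt hv')),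
        Real.log_div (ne_of_gt hv) (ne_of_gt hv'), Real.log_div (ne_of_gt hv') (ne_of_gt hv)]
      ring
  rw [Finset.sum_congr rfl fun S' _ => hconv S', ← Finset.mul_sum]
  have hφ1 : phiCond G S ≤ 1 := phi_le_one S
  have hφ0 : 0 ≤ phiCond G S := phi_nonneg S
  have hpos : 0 < 1 - phiCond G S ^ 2 / 8 := by nlinarith
  have hlogm : Real.log m ≤ - (phiCond G S ^ 2 / 8) := by
    calc Real.log m ≤ Real.log (1 - phiCond G S ^ 2 / 8) :=
          Real.log_le_log hmpos hmle
      _ ≤ (1 - phiCond G S ^ 2 / 8) - 1 := Real.log_le_sub_one_of_pos hpos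
      _ = - (phiCond G S ^ 2 / 8) := by ring
  have := hjensen
  nlinarith [hjensen, hlogm]

lemma drift_shift {S S₀ : Finset V} (hv : 0 < vol G S) (hv0 : 0 < vol G S₀) :
    Real.log (vol G S / vol G S₀) + phiCond G S ^ 2 / 4
      ≤ ∑ S' : Finset V, Khat G S S' * Real.log (vol G S' / vol G S₀) := by
  have hsplit : ∀ S' : Finset V, Khat G S S' * Real.log (vol G S' / vol G S₀)
      = Khat G S S' * Real.log (vol G S' / vol G S)
        + Khat G S S' * Real.log (vol G S / vol G S₀) := by
    intro S'
    rcases eq_or_lt_of_le (Khat_nonneg (G := G) S S') with h0 | h0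
    · rw [← h0]; ring
    · have hv' : 0 < vol G S' := by
        rcases eq_or_lt_of_le (vol_nonneg (G := G) S') with h1 | h1
        · exfalso; exact (ne_of_gt h0) (Khat_eq_zero_of_vol_zero S h1.symm)
        · exact h1
      rw [Real.log_div (ne_of_gt hv') (ne_of_gt hv0), Real.log_div (ne_of_gt hv') (ne_of_gt hv),
        Real.log_div (ne_of_gt hv) (ne_of_gt hv0)]
      ring
  rw [Finset.sum_congr rfl fun S' _ => hsplit S', Finset.sum_add_distrib, ← Finset.sum_mul,
    sum_Khat_one (ne_of_gt hv), one_mul]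
  have := drift_main (G := G) hv
  linarith

end Drift

-- ==================== Stage 4: path machinery ====================
section Paths

/-- weight of a finite path -/
def pathW (κ : Finset V → Finset V → ℝ) {n : ℕ} (w : Fin (n+1) → Finset V) : ℝ :=
  ∏ j : Fin n, κ (w j.castSucc) (w j.succ)

/-- freeze a finite path into an infinite one -/
def frz {T : ℕ} (w : Fin (T+1) → Finset V) : ℕ → Finset V :=
  fun n => w ⟨min n T, Nat.lt_succ_of_le (min_le_right n T)⟩

lemma EpathN_def (κ : Finset V → Finset V → ℝ) (S₀ : Finset V) (T : ℕ)
    (f : (ℕ → Finset V) → ℝ) :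
    EpathN κ S₀ T f = ∑ w : Fin (T+1) → Finset V,
      if w 0 = S₀ then pathW κ w * f (frz w) else 0 := rfl

lemma frz_of_le {T : ℕ} (w : Fin (T+1) → Finset V) {i : ℕ} (h : i ≤ T) :
    frz w i = w ⟨i, Nat.lt_succ_of_le h⟩ := by
  unfold frz
  congr 1
  exact Fin.ext (min_eq_left h)

lemma snoc_zero {T : ℕ} (w' : Fin (T+1) → Finset V) (S' : Finset V) :
    (Fin.snoc w' S' : Fin (T+2) → Finset V) 0 = w' 0 := by
  have h : (0 : Fin (T+2)) = Fin.castSucc (0 : Fin (T+1)) := rfl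
  rw [h, Fin.snoc_castSucc]

lemma pathW_snoc (κ : Finset V → Finset V → ℝ) {T : ℕ} (w' : Fin (T+1) → Finset V)
    (S' : Finset V) :
    pathW κ (Fin.snoc w' S' : Fin (T+2) → Finset V)
      = pathW κ w' * κ (w' (Fin.last T)) S' := by
  unfold pathW
  rw [Fin.prod_univ_castSucc
    (fun j : Fin (T+1) => κ ((Fin.snoc w' S' : Fin (T+2) → Finset V) j.castSucc)
      ((Fin.snoc w' S' : Fin (T+2) → Finset V) j.succ))]
  congr 1
  · apply Finset.prod_congr rfl
    intro i _
    congr 1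
    · rw [Fin.snoc_castSucc]
    · rw [Fin.succ_castSucc, Fin.snoc_castSucc]
  · congr 1
    · rw [Fin.snoc_castSucc]
    · rw [Fin.succ_last, Fin.snoc_last]

lemma frz_snoc_of_le {T : ℕ} (w' : Fin (T+1) → Finset V) (S' : Finset V) {i : ℕ}
    (h : i ≤ T) :
    frz (Fin.snoc w' S' : Fin (T+2) → Finset V) i = frz w' i := by
  rw [frz_of_le _ (le_trans h (Nat.le_succ T)), frz_of_le _ h]
  have hc : (⟨i, Nat.lt_succ_of_le (le_trans h (Nat.le_succ T))⟩ : Fin (T+2))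
      = Fin.castSucc ⟨i, Nat.lt_succ_of_le h⟩ := Fin.ext rfl
  rw [hc, Fin.snoc_castSucc]

lemma frz_snoc_top {T : ℕ} (w' : Fin (T+1) → Finset V) (S' : Finset V) {n : ℕ}
    (h : T + 1 ≤ n) :
    frz (Fin.snoc w' S' : Fin (T+2) → Finset V) n = S' := by
  unfold frz
  have hm : min n (T+1) = T+1 := min_eq_right h
  have hc : (⟨min n (T+1), Nat.lt_succ_of_le (min_le_right n (T+1))⟩ : Fin (T+2))
      = Fin.last (T+1) := Fin.ext (by simp [hm])
  rw [hc, Fin.snoc_last]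

/-- reindexing sums over paths of length `T+2` -/
def snocEquiv (T : ℕ) : ((Fin (T+1) → Finset V) × Finset V) ≃ (Fin (T+2) → Finset V) where
  toFun p := Fin.snoc p.1 p.2
  invFun w := (Fin.init w, w (Fin.last (T+1)))
  left_inv p := by simp [Fin.init_snoc, Fin.snoc_last]
  right_inv w := by simp [Fin.snoc_init_self]

lemma sum_snoc {T : ℕ} (F : (Fin (T+2) → Finset V) → ℝ) :
    ∑ w : Fin (T+2) → Finset V, F w
      = ∑ w' : Fin (T+1) → Finset V, ∑ S' : Finset V, F (Fin.snoc w' S') := by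
  rw [← Equiv.sum_comp (snocEquiv T) F, Fintype.sum_prod_type]
  rfl

end Paths

-- ==================== Stage 5: EpathN lemmas ====================
section EpathLemmas
variable {G : SimpleGraph V} [DecidableRel G.Adj] {S₀ : Finset V}

lemma pathW_nonneg {n : ℕ} (w : Fin (n+1) → Finset V) : 0 ≤ pathW (Khat G) w :=
  Finset.prod_nonneg fun j _ => Khat_nonneg _ _

lemma vol_pos_along (h0 : 0 < vol G S₀) {n : ℕ} {w : Fin (n+1) → Finset V}
    (hw : w 0 = S₀) (hW : pathW (Khat G) w ≠ 0) : ∀ j : Fin (n+1), 0 < vol G (w j) := by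
  suffices h : ∀ (k : ℕ) (hk : k < n+1), 0 < vol G (w ⟨k, hk⟩) by
    intro j; have := h j.1 j.2; simpa using this
  intro k
  induction k with
  | zero =>
      intro hk
      have : (⟨0, hk⟩ : Fin (n+1)) = 0 := Fin.ext rfl
      rw [this, hw]; exact h0
  | succ k ih =>
      intro hk
      have hkn : k < n := by omega
      set j : Fin n := ⟨k, hkn⟩ with hj
      have hfac : Khat G (w j.castSucc) (w j.succ) ≠ 0 := by
        unfold pathW at hW
        exact Finset.prod_ne_zero_iff.1 hW j (Finset.mem_univ j)
      have hsucc : j.succ = (⟨k+1, hk⟩ : Fin (n+1)) := Fin.ext rfl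
      rcases eq_or_lt_of_le (vol_nonneg (G := G) (w ⟨k+1, hk⟩)) with h1 | h1
      · exfalso
        apply hfac
        rw [hsucc]
        exact Khat_eq_zero_of_vol_zero _ h1.symm
      · exact h1

lemma EpathN_zero (κ : Finset V → Finset V → ℝ) (f : (ℕ → Finset V) → ℝ) :
    EpathN κ S₀ 0 f = f (fun _ => S₀) := by
  rw [EpathN_def]
  rw [← Equiv.sum_comp (Equiv.funUnique (Fin 1) (Finset V)).symm
    (fun w => if w 0 = S₀ then pathW κ w * f (frz w) else 0)]
  have h : ∀ S : Finset V,
      (if (fun _ : Fin 1 => S) 0 = S₀ then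
        pathW κ (fun _ : Fin 1 => S) * f (frz (fun _ : Fin 1 => S)) else 0)
      = if S = S₀ then f (fun _ => S) else 0 := by
    intro S
    have hW : pathW κ (fun _ : Fin 1 => S) = 1 := by
      unfold pathW; simp
    have hfrz : frz (fun _ : Fin 1 => S) = fun _ => S := rfl
    rw [hW, hfrz, one_mul]
  calc ∑ S : Finset V, (if (Equiv.funUnique (Fin 1) (Finset V)).symm S 0 = S₀ then
          pathW κ ((Equiv.funUnique (Fin 1) (Finset V)).symm S)
            * f (frz ((Equiv.funUnique (Fin 1) (Finset V)).symm S)) else 0)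
      = ∑ S : Finset V, if S = S₀ then f (fun _ => S) else 0 :=
        Finset.sum_congr rfl fun S _ => h S
    _ = f (fun _ => S₀) := by
        rw [Finset.sum_ite_eq' Finset.univ S₀ (fun S => f (fun _ => S))]
        simp

lemma EpathN_succ (h0 : 0 < vol G S₀) (T : ℕ) (f : (ℕ → Finset V) → ℝ)
    (Hf : ∀ s s' : ℕ → Finset V, (∀ i ≤ T, s i = s' i) → f s = f s') :
    EpathN (Khat G) S₀ (T+1) f = EpathN (Khat G) S₀ T f := by
  rw [EpathN_def, EpathN_def]
  rw [sum_snoc (fun w => if w 0 = S₀ then pathW (Khat G) w * f (frz w) else 0)]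
  apply Finset.sum_congr rfl
  intro w' _
  have hterm : ∀ S' : Finset V,
      (if (Fin.snoc w' S' : Fin (T+2) → Finset V) 0 = S₀ then
        pathW (Khat G) (Fin.snoc w' S' : Fin (T+2) → Finset V)
          * f (frz (Fin.snoc w' S' : Fin (T+2) → Finset V)) else 0)
      = if w' 0 = S₀ then
          pathW (Khat G) w' * Khat G (w' (Fin.last T)) S' * f (frz w') else 0 := by
    intro S'
    rw [snoc_zero]
    by_cases h : w' 0 = S₀
    · rw [if_pos h, if_pos h, pathW_snoc]
      congr 1
      exact Hf _ _ fun i hi => frz_snoc_of_le w' S' hi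
    · rw [if_neg h, if_neg h]
  rw [Finset.sum_congr rfl fun S' _ => hterm S']
  by_cases h : w' 0 = S₀
  · simp only [h, if_pos]
    by_cases hW : pathW (Khat G) w' = 0
    · simp [hW]
    · have hvol : 0 < vol G (w' (Fin.last T)) := vol_pos_along h0 h hW (Fin.last T)
      have : ∀ S' : Finset V, pathW (Khat G) w' * Khat G (w' (Fin.last T)) S' * f (frz w')
          = (pathW (Khat G) w' * f (frz w')) * Khat G (w' (Fin.last T)) S' := by
        intro S'; ring
      rw [Finset.sum_congr rfl fun S' _ => this S', ← Finset.mul_sum,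
        sum_Khat_one (ne_of_gt hvol), mul_one]
  · simp [h]

lemma EpathN_one (h0 : 0 < vol G S₀) (T : ℕ) :
    EpathN (Khat G) S₀ T (fun _ => 1) = 1 := by
  induction T with
  | zero => rw [EpathN_zero]
  | succ T ih => rw [EpathN_succ h0 T (fun _ => (1:ℝ)) (fun _ _ _ => rfl), ih]

lemma EpathN_add (κ : Finset V → Finset V → ℝ) (T : ℕ) (f g : (ℕ → Finset V) → ℝ) :
    EpathN κ S₀ T (fun s => f s + g s) = EpathN κ S₀ T f + EpathN κ S₀ T g := by
  rw [EpathN_def, EpathN_def, EpathN_def, ← Finset.sum_add_distrib]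
  apply Finset.sum_congr rfl
  intro w _
  by_cases h : w 0 = S₀ <;> simp [h, mul_add]

lemma EpathN_finsum {k : ℕ} (κ : Finset V → Finset V → ℝ) (T : ℕ)
    (F : ℕ → (ℕ → Finset V) → ℝ) :
    EpathN κ S₀ T (fun s => ∑ m ∈ Finset.range k, F m s)
      = ∑ m ∈ Finset.range k, EpathN κ S₀ T (F m) := by
  induction k with
  | zero => simp [EpathN_def]
  | succ k ih =>
      rw [Finset.sum_range_succ, ← ih, ← EpathN_add]
      congr 1
      funext s
      rw [Finset.sum_range_succ]

lemma EpathN_le_of_support (T : ℕ) (f g : (ℕ → Finset V) → ℝ)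
    (h : ∀ w : Fin (T+1) → Finset V, w 0 = S₀ → pathW (Khat G) w ≠ 0 →
      f (frz w) ≤ g (frz w)) :
    EpathN (Khat G) S₀ T f ≤ EpathN (Khat G) S₀ T g := by
  rw [EpathN_def, EpathN_def]
  apply Finset.sum_le_sum
  intro w _
  by_cases hw : w 0 = S₀
  · rw [if_pos hw, if_pos hw]
    by_cases hW : pathW (Khat G) w = 0
    · rw [hW, zero_mul, zero_mul]
    · exact mul_le_mul_of_nonneg_left (h w hw hW) (pathW_nonneg w)
  · rw [if_neg hw, if_neg hw]

lemma EpathN_nonneg (T : ℕ) (f : (ℕ → Finset V) → ℝ)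
    (h : ∀ w : Fin (T+1) → Finset V, w 0 = S₀ → pathW (Khat G) w ≠ 0 →
      0 ≤ f (frz w)) :
    0 ≤ EpathN (Khat G) S₀ T f := by
  rw [EpathN_def]
  apply Finset.sum_nonneg
  intro w _
  by_cases hw : w 0 = S₀
  · rw [if_pos hw]
    by_cases hW : pathW (Khat G) w = 0
    · rw [hW, zero_mul]
    · exact mul_nonneg (pathW_nonneg w) (h w hw hW)
  · rw [if_neg hw]

lemma EpathN_abs_le (T : ℕ) (f g : (ℕ → Finset V) → ℝ)
    (h : ∀ w : Fin (T+1) → Finset V, w 0 = S₀ → pathW (Khat G) w ≠ 0 →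
      |f (frz w)| ≤ g (frz w)) :
    |EpathN (Khat G) S₀ T f| ≤ EpathN (Khat G) S₀ T g := by
  rw [EpathN_def, EpathN_def]
  calc |∑ w : Fin (T+1) → Finset V, if w 0 = S₀ then pathW (Khat G) w * f (frz w) else 0|
      ≤ ∑ w : Fin (T+1) → Finset V,
          |if w 0 = S₀ then pathW (Khat G) w * f (frz w) else 0| :=
        Finset.abs_sum_le_sum_abs _ _
    _ ≤ ∑ w : Fin (T+1) → Finset V, if w 0 = S₀ then pathW (Khat G) w * g (frz w) else 0 := by
        apply Finset.sum_le_sum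
        intro w _
        by_cases hw : w 0 = S₀
        · rw [if_pos hw, if_pos hw, abs_mul, abs_of_nonneg (pathW_nonneg w)]
          by_cases hW : pathW (Khat G) w = 0
          · rw [hW, zero_mul, zero_mul]
          · exact mul_le_mul_of_nonneg_left (h w hw hW) (pathW_nonneg w)
        · rw [if_neg hw, abs_zero, if_neg hw]

end EpathLemmas

-- ==================== Stage 6: smul lemma + König ====================
section Koenig
variable {G : SimpleGraph V} [DecidableRel G.Adj] {S₀ : Finset V}

lemma EpathN_smul (κ : Finset V → Finset V → ℝ) (T : ℕ) (c : ℝ) (f : (ℕ → Finset V) → ℝ) :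
    EpathN κ S₀ T (fun s => c * f s) = c * EpathN κ S₀ T f := by
  rw [EpathN_def, EpathN_def, Finset.mul_sum]
  apply Finset.sum_congr rfl
  intro w _
  by_cases h : w 0 = S₀ <;> simp [h] <;> ring

/-- extendability of a node of depth `n` -/
def GoodExt (S₀ : Finset V) (τ : (ℕ → Finset V) → ℕ) (n : ℕ) (s : ℕ → Finset V) : Prop :=
  ∀ N : ℕ, ∃ s' : ℕ → Finset V, (s' 0 = S₀ ∧ N < τ s') ∧ ∀ i ≤ n, s' i = s i

lemma koenig (S₀ : Finset V) (τ : (ℕ → Finset V) → ℕ) (hτ : IsStopping τ)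
    (hA : ∀ N : ℕ, ∃ s : ℕ → Finset V, s 0 = S₀ ∧ N < τ s) : False := by
  classical
  have hbase : GoodExt S₀ τ 0 (fun _ => S₀) := by
    intro N
    obtain ⟨s', h0, hN⟩ := hA N
    refine ⟨s', ⟨h0, hN⟩, fun i hi => ?_⟩
    have : i = 0 := Nat.le_zero.1 hi
    subst this
    exact h0
  have hstep : ∀ n s, GoodExt S₀ τ n s →
      ∃ s₂, GoodExt S₀ τ (n+1) s₂ ∧ ∀ i ≤ n, s₂ i = s i := by
    intro n s hG
    by_contra hno
    push_neg at hno
    have hchild : ∀ S' : Finset V, ¬ GoodExt S₀ τ (n+1) (fun i => if i ≤ n then s i else S') := by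
      intro S' hGc
      have hag : ∀ i ≤ n, (fun i => if i ≤ n then s i else S') i = s i := by
        intro i hi; simp [hi]
      obtain ⟨i, hi, hne⟩ := hno _ hGc
      exact hne (hag i hi)
    have hfail : ∀ S' : Finset V, ∃ N : ℕ, ¬ ∃ s' : ℕ → Finset V,
        (s' 0 = S₀ ∧ N < τ s') ∧ ∀ i ≤ n+1, s' i = (fun i => if i ≤ n then s i else S') i := by
      intro S'
      have := hchild S'
      unfold GoodExt at this
      push_neg at this
      obtain ⟨N, hN⟩ := this
      exact ⟨N, by push_neg; exact hN⟩
    choose g hg using hfail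
    set Nstar := Finset.univ.sup g with hNs
    obtain ⟨sstar, ⟨hs0, hslt⟩, hsag⟩ := hG Nstar
    apply hg (sstar (n+1))
    refine ⟨sstar, ⟨hs0, lt_of_le_of_lt (Finset.le_sup (Finset.mem_univ (sstar (n+1)))) hslt⟩,
      fun i hi => ?_⟩
    by_cases hin : i ≤ n
    · simp only [hin, if_pos]
      exact hsag i hin
    · have : i = n+1 := by omega
      subst this
      simp [hin]
  let seq : (n : ℕ) → {s : ℕ → Finset V // GoodExt S₀ τ n s} :=
    fun n => Nat.rec ⟨fun _ => S₀, hbase⟩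
      (fun n p => ⟨Classical.choose (hstep n p.1 p.2),
        (Classical.choose_spec (hstep n p.1 p.2)).1⟩) n
  have hseq_succ : ∀ n, ∀ i ≤ n, (seq (n+1)).1 i = (seq n).1 i :=
    fun n => (Classical.choose_spec (hstep n (seq n).1 (seq n).2)).2
  have hmono : ∀ m n, n ≤ m → ∀ i ≤ n, (seq m).1 i = (seq n).1 i := by
    intro m
    induction m with
    | zero =>
        intro n hn i hi
        have : n = 0 := Nat.le_zero.1 hn
        subst this; rfl
    | succ m ih =>
        intro n hn i hi
        rcases Nat.lt_or_ge n (m+1) with h | h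
        · have hnm : n ≤ m := by omega
          rw [hseq_succ m i (le_trans hi hnm)]
          exact ih n hnm i hi
        · have : n = m+1 := by omega
          subst this; rfl
  set σ : ℕ → Finset V := fun i => (seq i).1 i with hσdef
  have hσ : ∀ n, ∀ i ≤ n, σ i = (seq n).1 i := by
    intro n i hi
    show (seq i).1 i = (seq n).1 i
    rw [hmono n i hi i le_rfl]
  obtain ⟨s', ⟨_, hM⟩, hag⟩ := (seq (τ σ)).2 (τ σ)
  have hts' : τ s' = τ σ := by
    apply hτ σ s' (τ σ) rfl
    intro i hi
    rw [hag i hi, ← hσ (τ σ) i hi]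
  rw [hts'] at hM
  exact lt_irrefl _ hM

end Koenig

-- ==================== Stage 7: martingale machinery ====================
section Mart
variable (G : SimpleGraph V) [DecidableRel G.Adj] (S₀ : Finset V) (τ : (ℕ → Finset V) → ℕ)

def Afun (t : ℕ) : (ℕ → Finset V) → ℝ :=
  fun s => if t < τ s then phiCond G (s t) ^ 2 else 0

def Bfun (t : ℕ) : (ℕ → Finset V) → ℝ :=
  fun s => if τ s = t then Real.log (vol G (s t) / vol G S₀) else 0

def Cfun (N : ℕ) : (ℕ → Finset V) → ℝ :=
  fun s => if N < τ s then Real.log (vol G (s N) / vol G S₀) else 0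

def Lfun (N : ℕ) : (ℕ → Finset V) → ℝ :=
  fun s => Real.log (vol G (s (min (τ s) N)) / vol G S₀)

def Pfun (t : ℕ) : (ℕ → Finset V) → ℝ := fun s => if τ s = t then 1 else 0

def Qfun (N : ℕ) : (ℕ → Finset V) → ℝ := fun s => if N < τ s then 1 else 0

variable {G S₀ τ}

lemma tau_eq_congr (hτ : IsStopping τ) {s s' : ℕ → Finset V} {m n : ℕ} (hmn : m ≤ n)
    (h : ∀ i ≤ n, s i = s' i) (ht : τ s = m) : τ s' = m :=
  hτ s s' m ht fun i hi => (h i (le_trans hi hmn)).symm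

lemma lt_tau_congr (hτ : IsStopping τ) {s s' : ℕ → Finset V} {n : ℕ}
    (h : ∀ i ≤ n, s i = s' i) (hlt : n < τ s) : n < τ s' := by
  by_contra hle
  push_neg at hle
  have := tau_eq_congr hτ hle (fun i hi => (h i hi).symm) rfl
  omega

lemma Bfun_congr (hτ : IsStopping τ) {m : ℕ} {s s' : ℕ → Finset V}
    (h : ∀ i ≤ m, s i = s' i) : Bfun G S₀ τ m s = Bfun G S₀ τ m s' := by
  unfold Bfun
  by_cases h1 : τ s = m
  · rw [if_pos h1, if_pos (tau_eq_congr hτ le_rfl h h1), h m le_rfl]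
  · rw [if_neg h1, if_neg]
    intro h2
    exact h1 (tau_eq_congr hτ le_rfl (fun i hi => (h i hi).symm) h2)

lemma Pfun_congr (hτ : IsStopping τ) {m : ℕ} {s s' : ℕ → Finset V}
    (h : ∀ i ≤ m, s i = s' i) : Pfun τ m s = Pfun τ m s' := by
  unfold Pfun
  by_cases h1 : τ s = m
  · rw [if_pos h1, if_pos (tau_eq_congr hτ le_rfl h h1)]
  · rw [if_neg h1, if_neg]
    intro h2
    exact h1 (tau_eq_congr hτ le_rfl (fun i hi => (h i hi).symm) h2)

lemma Qfun_congr (hτ : IsStopping τ) {N : ℕ} {s s' : ℕ → Finset V}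
    (h : ∀ i ≤ N, s i = s' i) : Qfun τ N s = Qfun τ N s' := by
  unfold Qfun
  by_cases h1 : N < τ s
  · rw [if_pos h1, if_pos (lt_tau_congr hτ h h1)]
  · rw [if_neg h1, if_neg]
    intro h2
    exact h1 (lt_tau_congr hτ (fun i hi => (h i hi).symm) h2)

lemma EpathN_eq_of_le (h0 : 0 < vol G S₀) {m N : ℕ} (hm : m ≤ N) (f : (ℕ → Finset V) → ℝ)
    (Hf : ∀ s s' : ℕ → Finset V, (∀ i ≤ m, s i = s' i) → f s = f s') :
    EpathN (Khat G) S₀ N f = EpathN (Khat G) S₀ m f := by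
  induction N, hm using Nat.le_induction with
  | base => rfl
  | succ N hm ih =>
      rw [EpathN_succ h0 N f (fun s s' h => Hf s s' (fun i hi => h i (le_trans hi hm))), ih]

lemma step_ineq (hτ : IsStopping τ) (h0 : 0 < vol G S₀) (N : ℕ) :
    EpathN (Khat G) S₀ N (Lfun G S₀ τ N) + (1/4) * EpathN (Khat G) S₀ N (Afun G τ N)
      ≤ EpathN (Khat G) S₀ (N+1) (Lfun G S₀ τ (N+1)) := by
  rw [← EpathN_smul (Khat G) N (1/4) (Afun G τ N), ← EpathN_add]
  rw [EpathN_def, EpathN_def,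
    sum_snoc (fun w => if w 0 = S₀ then pathW (Khat G) w * Lfun G S₀ τ (N+1) (frz w) else 0)]
  apply Finset.sum_le_sum
  intro w' _
  by_cases hw : w' 0 = S₀
  swap
  · rw [if_neg hw]
    apply le_of_eq
    symm
    apply Finset.sum_eq_zero
    intro S' _
    rw [snoc_zero, if_neg hw]
  rw [if_pos hw]
  have hterm : ∀ S' : Finset V,
      (if (Fin.snoc w' S' : Fin (N+2) → Finset V) 0 = S₀ then
        pathW (Khat G) (Fin.snoc w' S' : Fin (N+2) → Finset V)
          * Lfun G S₀ τ (N+1) (frz (Fin.snoc w' S' : Fin (N+2) → Finset V)) else 0)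
      = pathW (Khat G) w' * Khat G (w' (Fin.last N)) S'
          * Lfun G S₀ τ (N+1) (frz (Fin.snoc w' S' : Fin (N+2) → Finset V)) := by
    intro S'
    rw [snoc_zero, if_pos hw, pathW_snoc]
  rw [Finset.sum_congr rfl fun S' _ => hterm S']
  by_cases hW : pathW (Khat G) w' = 0
  · rw [hW, zero_mul]
    apply le_of_eq
    symm
    apply Finset.sum_eq_zero
    intro S' _
    rw [zero_mul, zero_mul]
  have hvol := vol_pos_along h0 hw hW
  have hagree : ∀ S' : Finset V, ∀ i ≤ N,
      frz w' i = frz (Fin.snoc w' S' : Fin (N+2) → Finset V) i :=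
    fun S' i hi => (frz_snoc_of_le w' S' hi).symm
  by_cases hcase : τ (frz w') ≤ N
  · -- stopped before horizon: equality
    set m := τ (frz w') with hm
    have htval : ∀ S' : Finset V, τ (frz (Fin.snoc w' S' : Fin (N+2) → Finset V)) = m :=
      fun S' => tau_eq_congr hτ hcase (hagree S') rfl
    have hLval : ∀ S' : Finset V,
        Lfun G S₀ τ (N+1) (frz (Fin.snoc w' S' : Fin (N+2) → Finset V))
          = Real.log (vol G (frz w' m) / vol G S₀) := by
      intro S'
      unfold Lfun
      rw [htval S', min_eq_left (by omega), ← hagree S' m hcase]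
    have hsum : ∑ S' : Finset V, pathW (Khat G) w' * Khat G (w' (Fin.last N)) S'
        * Lfun G S₀ τ (N+1) (frz (Fin.snoc w' S' : Fin (N+2) → Finset V))
        = pathW (Khat G) w' * Real.log (vol G (frz w' m) / vol G S₀) := by
      rw [Finset.sum_congr rfl fun S' _ => by rw [hLval S']]
      rw [Finset.sum_congr rfl fun S' _ => show
        pathW (Khat G) w' * Khat G (w' (Fin.last N)) S' * Real.log (vol G (frz w' m) / vol G S₀)
        = (pathW (Khat G) w' * Real.log (vol G (frz w' m) / vol G S₀))
            * Khat G (w' (Fin.last N)) S' by ring]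
      rw [← Finset.mul_sum, sum_Khat_one (ne_of_gt (hvol (Fin.last N))), mul_one]
    rw [hsum]
    apply le_of_eq
    congr 1
    unfold Lfun Afun
    rw [← hm, min_eq_left hcase, if_neg (by omega), mul_zero, add_zero]
  · -- not yet stopped: use the drift lemma
    push_neg at hcase
    have hNlt : ∀ S' : Finset V, N < τ (frz (Fin.snoc w' S' : Fin (N+2) → Finset V)) :=
      fun S' => lt_tau_congr hτ (hagree S') hcase
    have hLval : ∀ S' : Finset V,
        Lfun G S₀ τ (N+1) (frz (Fin.snoc w' S' : Fin (N+2) → Finset V))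
          = Real.log (vol G S' / vol G S₀) := by
      intro S'
      unfold Lfun
      rw [min_eq_right (by have := hNlt S'; omega), frz_snoc_top w' S' le_rfl]
    have hlastN : frz w' N = w' (Fin.last N) := by
      rw [frz_of_le w' le_rfl]
      exact congrArg w' (Fin.ext rfl)
    have hlhs : Lfun G S₀ τ N (frz w') + 1/4 * Afun G τ N (frz w')
        = Real.log (vol G (w' (Fin.last N)) / vol G S₀)
          + phiCond G (w' (Fin.last N)) ^ 2 / 4 := by
      unfold Lfun Afun
      rw [min_eq_right (by omega), if_pos hcase, hlastN]
      ring
    rw [hlhs]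
    have hdrift := drift_shift (G := G) (hvol (Fin.last N)) h0
    calc pathW (Khat G) w' * (Real.log (vol G (w' (Fin.last N)) / vol G S₀)
            + phiCond G (w' (Fin.last N)) ^ 2 / 4)
        ≤ pathW (Khat G) w' * ∑ S' : Finset V, Khat G (w' (Fin.last N)) S'
            * Real.log (vol G S' / vol G S₀) :=
          mul_le_mul_of_nonneg_left hdrift (pathW_nonneg w')
      _ = ∑ S' : Finset V, pathW (Khat G) w' * Khat G (w' (Fin.last N)) S'
            * Lfun G S₀ τ (N+1) (frz (Fin.snoc w' S' : Fin (N+2) → Finset V)) := by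
          rw [Finset.mul_sum]
          apply Finset.sum_congr rfl
          intro S' _
          rw [hLval S']
          ring

end Mart

-- ==================== Stage 8: optional stopping, bounds ====================
section Mart2
variable {G : SimpleGraph V} [DecidableRel G.Adj] {S₀ : Finset V} {τ : (ℕ → Finset V) → ℕ}

lemma L_zero : EpathN (Khat G) S₀ 0 (Lfun G S₀ τ 0) = Real.log (vol G S₀ / vol G S₀) := by
  rw [EpathN_zero]
  rfl

lemma sum_A_le_L (hτ : IsStopping τ) (h0 : 0 < vol G S₀) (N : ℕ) :
    ∑ t ∈ Finset.range N, EpathN (Khat G) S₀ t (Afun G τ t)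
      ≤ 4 * EpathN (Khat G) S₀ N (Lfun G S₀ τ N) := by
  induction N with
  | zero =>
      rw [Finset.sum_range_zero, L_zero, div_self (ne_of_gt h0), Real.log_one]
      norm_num
  | succ N ih =>
      rw [Finset.sum_range_succ]
      have hs := step_ineq hτ h0 N
      linarith

lemma L_decomp (hτ : IsStopping τ) (h0 : 0 < vol G S₀) (N : ℕ) :
    EpathN (Khat G) S₀ N (Lfun G S₀ τ N)
      = ∑ m ∈ Finset.range (N+1), EpathN (Khat G) S₀ m (Bfun G S₀ τ m)
        + EpathN (Khat G) S₀ N (Cfun G S₀ τ N) := by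
  have hpt : Lfun G S₀ τ N
      = fun s => (∑ m ∈ Finset.range (N+1), Bfun G S₀ τ m s) + Cfun G S₀ τ N s := by
    funext s
    unfold Lfun Bfun Cfun
    by_cases h : τ s ≤ N
    · rw [if_neg (by omega), add_zero, min_eq_left h]
      rw [Finset.sum_ite_eq (Finset.range (N+1)) (τ s)
        (fun m => Real.log (vol G (s m) / vol G S₀)), if_pos (Finset.mem_range.2 (by omega))]
    · push_neg at h
      rw [if_pos h, min_eq_right (by omega)]
      rw [Finset.sum_congr rfl fun m hm => if_neg (by
        intro he
        rw [he] at h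
        exact absurd (Finset.mem_range.1 hm) (by omega)), Finset.sum_const_zero, zero_add]
  rw [hpt, EpathN_add, EpathN_finsum]
  congr 1
  apply Finset.sum_congr rfl
  intro m hm
  exact EpathN_eq_of_le h0 (Nat.lt_succ_iff.1 (Finset.mem_range.1 hm)) (Bfun G S₀ τ m)
    (fun s s' h => Bfun_congr hτ h)

lemma mass_partition (hτ : IsStopping τ) (h0 : 0 < vol G S₀) (N : ℕ) :
    ∑ m ∈ Finset.range (N+1), EpathN (Khat G) S₀ m (Pfun τ m)
      + EpathN (Khat G) S₀ N (Qfun τ N) = 1 := by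
  have hpt : (fun _ : ℕ → Finset V => (1:ℝ))
      = fun s => (∑ m ∈ Finset.range (N+1), Pfun τ m s) + Qfun τ N s := by
    funext s
    unfold Pfun Qfun
    by_cases h : τ s ≤ N
    · rw [if_neg (by omega), add_zero,
        Finset.sum_ite_eq (Finset.range (N+1)) (τ s) (fun _ => (1:ℝ)),
        if_pos (Finset.mem_range.2 (by omega))]
    · push_neg at h
      rw [if_pos h, Finset.sum_congr rfl fun m hm => if_neg (by
          intro he
          rw [he] at h
          exact absurd (Finset.mem_range.1 hm) (by omega)), Finset.sum_const_zero, zero_add]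
  have h1 := EpathN_one (S₀ := S₀) h0 N
  rw [hpt, EpathN_add, EpathN_finsum] at h1
  rw [← h1]
  congr 1
  apply Finset.sum_congr rfl
  intro m hm
  exact (EpathN_eq_of_le h0 (Nat.lt_succ_iff.1 (Finset.mem_range.1 hm)) (Pfun τ m)
    (fun s s' h => Pfun_congr hτ h)).symm

lemma A_nonneg (t : ℕ) : 0 ≤ EpathN (Khat G) S₀ t (Afun G τ t) := by
  apply EpathN_nonneg
  intro w _ _
  unfold Afun
  split
  · positivity
  · exact le_refl 0

lemma P_nonneg (t : ℕ) : 0 ≤ EpathN (Khat G) S₀ t (Pfun τ t) := by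
  apply EpathN_nonneg
  intro w _ _
  unfold Pfun
  split <;> norm_num

lemma Q_nonneg (N : ℕ) : 0 ≤ EpathN (Khat G) S₀ N (Qfun τ N) := by
  apply EpathN_nonneg
  intro w _ _
  unfold Qfun
  split <;> norm_num

lemma vol_frz_bounds (h0 : 0 < vol G S₀) {T : ℕ} {w : Fin (T+1) → Finset V}
    (hw : w 0 = S₀) (hW : pathW (Khat G) w ≠ 0) (n : ℕ) :
    1 ≤ vol G (frz w n) ∧ vol G (frz w n) ≤ vol G Finset.univ := by
  have hpos := vol_pos_along h0 hw hW ⟨min n T, Nat.lt_succ_of_le (min_le_right n T)⟩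
  exact ⟨one_le_vol (ne_of_gt hpos), vol_le_vol_univ _⟩

lemma abs_log_ratio_le (h0 : 0 < vol G S₀) {x : ℝ} (hx1 : 1 ≤ x)
    (hxU : x ≤ vol G Finset.univ) :
    |Real.log (x / vol G S₀)| ≤ Real.log (vol G Finset.univ) := by
  have hv1 : 1 ≤ vol G S₀ := one_le_vol (ne_of_gt h0)
  have hvU : vol G S₀ ≤ vol G Finset.univ := vol_le_vol_univ S₀
  rw [Real.log_div (by linarith) (by linarith), abs_le]
  constructor
  · have h1 : 0 ≤ Real.log x := Real.log_nonneg hx1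
    have h2 : Real.log (vol G S₀) ≤ Real.log (vol G Finset.univ) :=
      Real.log_le_log (by linarith) hvU
    linarith
  · have h1 : Real.log x ≤ Real.log (vol G Finset.univ) := Real.log_le_log (by linarith) hxU
    have h2 : 0 ≤ Real.log (vol G S₀) := Real.log_nonneg hv1
    linarith

lemma abs_b_le (hτ : IsStopping τ) (h0 : 0 < vol G S₀) (m : ℕ) :
    |EpathN (Khat G) S₀ m (Bfun G S₀ τ m)|
      ≤ Real.log (vol G Finset.univ) * EpathN (Khat G) S₀ m (Pfun τ m) := by
  rw [← EpathN_smul (Khat G) m (Real.log (vol G Finset.univ)) (Pfun τ m)]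
  apply EpathN_abs_le
  intro w hw hW
  unfold Bfun Pfun
  by_cases h : τ (frz w) = m
  · rw [if_pos h, if_pos h, mul_one]
    obtain ⟨h1, h2⟩ := vol_frz_bounds h0 hw hW m
    exact abs_log_ratio_le h0 h1 h2
  · rw [if_neg h, if_neg h, abs_zero, mul_zero]

lemma abs_c_le (hτ : IsStopping τ) (h0 : 0 < vol G S₀) (N : ℕ) :
    |EpathN (Khat G) S₀ N (Cfun G S₀ τ N)|
      ≤ Real.log (vol G Finset.univ) * EpathN (Khat G) S₀ N (Qfun τ N) := by
  rw [← EpathN_smul (Khat G) N (Real.log (vol G Finset.univ)) (Qfun τ N)]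
  apply EpathN_abs_le
  intro w hw hW
  unfold Cfun Qfun
  by_cases h : N < τ (frz w)
  · rw [if_pos h, if_pos h, mul_one]
    obtain ⟨h1, h2⟩ := vol_frz_bounds h0 hw hW N
    exact abs_log_ratio_le h0 h1 h2
  · rw [if_neg h, if_neg h, abs_zero, mul_zero]

lemma Q_antitone (hτ : IsStopping τ) (h0 : 0 < vol G S₀) (N : ℕ) :
    EpathN (Khat G) S₀ (N+1) (Qfun τ (N+1)) ≤ EpathN (Khat G) S₀ N (Qfun τ N) := by
  have h1 : EpathN (Khat G) S₀ (N+1) (Qfun τ (N+1)) ≤ EpathN (Khat G) S₀ (N+1) (Qfun τ N) := by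
    apply EpathN_le_of_support
    intro w _ _
    unfold Qfun
    by_cases h : N+1 < τ (frz w)
    · rw [if_pos h, if_pos (by omega)]
    · rw [if_neg h]
      split <;> norm_num
  have h2 : EpathN (Khat G) S₀ (N+1) (Qfun τ N) = EpathN (Khat G) S₀ N (Qfun τ N) :=
    EpathN_succ h0 N (Qfun τ N) (fun s s' h => Qfun_congr hτ h)
  linarith

lemma Q_le_one (hτ : IsStopping τ) (h0 : 0 < vol G S₀) (N : ℕ) :
    EpathN (Khat G) S₀ N (Qfun τ N) ≤ 1 := by
  have := mass_partition hτ h0 N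
  have hP : 0 ≤ ∑ m ∈ Finset.range (N+1), EpathN (Khat G) S₀ m (Pfun τ m) :=
    Finset.sum_nonneg fun m _ => P_nonneg m
  linarith

lemma Q_tendsto_zero (hτ : IsStopping τ) (h0 : 0 < vol G S₀) :
    Filter.Tendsto (fun N => EpathN (Khat G) S₀ N (Qfun τ N)) Filter.atTop (nhds 0) := by
  set Q : ℕ → ℝ := fun N => EpathN (Khat G) S₀ N (Qfun τ N) with hQ
  have hanti : Antitone Q := antitone_nat_of_succ_le (Q_antitone hτ h0)
  have hbdd : BddBelow (Set.range Q) := ⟨0, fun x ⟨N, hN⟩ => hN ▸ Q_nonneg N⟩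
  have htend := tendsto_atTop_ciInf hanti hbdd
  have hq0 : (⨅ N, Q N) = 0 := by
    rcases lt_trichotomy (⨅ N, Q N) 0 with h | h | h
    · exfalso
      have := le_ciInf (fun N => Q_nonneg (G := G) (S₀ := S₀) (τ := τ) N)
      linarith
    · exact h
    · exfalso
      apply koenig S₀ τ hτ
      intro N
      have hQN : Q N ≠ 0 := by
        have := ciInf_le hbdd N
        linarith
      have hQN' : EpathN (Khat G) S₀ N (Qfun τ N) ≠ 0 := hQN
      rw [EpathN_def] at hQN'
      obtain ⟨w, _, hwne⟩ := Finset.exists_ne_zero_of_sum_ne_zero hQN'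
      by_cases hw : w 0 = S₀
      · rw [if_pos hw] at hwne
        have hQf : Qfun τ N (frz w) ≠ 0 := by
          intro hz
          rw [hz, mul_zero] at hwne
          exact hwne rfl
        unfold Qfun at hQf
        have hlt : N < τ (frz w) := by
          by_contra hnl
          rw [if_neg hnl] at hQf
          exact hQf rfl
        refine ⟨frz w, ?_, hlt⟩
        rw [frz_of_le w (Nat.zero_le N)]
        rw [show (⟨0, Nat.lt_succ_of_le (Nat.zero_le N)⟩ : Fin (N+1)) = 0 from Fin.ext rfl]
        exact hw
      · rw [if_neg hw] at hwne
        exact absurd rfl hwne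
  rw [← hq0]
  exact htend

end Mart2

-- ==================== Stage 9: final assembly ====================
section Final
variable {G : SimpleGraph V} [DecidableRel G.Adj] {S₀ : Finset V} {τ : (ℕ → Finset V) → ℕ}

lemma log_vol_univ_nonneg (G : SimpleGraph V) [DecidableRel G.Adj] :
    0 ≤ Real.log (vol G Finset.univ) := by
  rcases eq_or_ne (vol G Finset.univ) 0 with h | h
  · rw [h, Real.log_zero]
  · exact Real.log_nonneg (one_le_vol h)

lemma degenerate_term_zero (hvol : vol G S₀ = 0) (t : ℕ) (f : ℕ → (ℕ → Finset V) → ℝ)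
    (hf0 : f 0 (fun _ => S₀) = 0) :
    EpathN (Khat G) S₀ t (f t) = 0 := by
  cases t with
  | zero => rw [EpathN_zero]; exact hf0
  | succ T =>
      rw [EpathN_def]
      apply Finset.sum_eq_zero
      intro w _
      by_cases hw : w 0 = S₀
      · rw [if_pos hw]
        have hW : pathW (Khat G) w = 0 := by
          unfold pathW
          apply Finset.prod_eq_zero (Finset.mem_univ (0 : Fin (T+1)))
          have hc : (0 : Fin (T+1)).castSucc = (0 : Fin (T+2)) := rfl
          rw [hc, hw]
          unfold Khat
          rw [hvol, div_zero, zero_mul]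
        rw [hW, zero_mul]
      · rw [if_neg hw]

theorem statement9' (G : SimpleGraph V) [DecidableRel G.Adj]
    (S₀ : Finset V) (hS₀ : S₀.Nonempty)
    (τ : (ℕ → Finset V) → ℕ) (hτ : IsStopping τ) :
    (∑' t : ℕ, EpathN (Khat G) S₀ t fun s => if t < τ s then phiCond G (s t) ^ 2 else 0) ≤
        4 * (∑' t : ℕ, EpathN (Khat G) S₀ t
          fun s => if τ s = t then Real.log (vol G (s t) / vol G S₀) else 0) ∧
      4 * (∑' t : ℕ, EpathN (Khat G) S₀ t
          fun s => if τ s = t then Real.log (vol G (s t) / vol G S₀) else 0) ≤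
        4 * Real.log (vol G Finset.univ) := by
  have hAeq : (fun t => EpathN (Khat G) S₀ t
      fun s => if t < τ s then phiCond G (s t) ^ 2 else 0)
      = fun t => EpathN (Khat G) S₀ t (Afun G τ t) := rfl
  have hBeq : (fun t => EpathN (Khat G) S₀ t
      fun s => if τ s = t then Real.log (vol G (s t) / vol G S₀) else 0)
      = fun t => EpathN (Khat G) S₀ t (Bfun G S₀ τ t) := rfl
  rw [hAeq, hBeq]
  rcases eq_or_lt_of_le (vol_nonneg (G := G) S₀) with h0 | h0
  · -- degenerate case : vol S₀ = 0
    have hvol : vol G S₀ = 0 := h0.symm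
    have hA0 : ∀ t, EpathN (Khat G) S₀ t (Afun G τ t) = 0 := by
      intro t
      apply degenerate_term_zero hvol t (Afun G τ)
      unfold Afun phiCond
      rw [hvol, div_zero]
      split <;> norm_num
    have hB0 : ∀ t, EpathN (Khat G) S₀ t (Bfun G S₀ τ t) = 0 := by
      intro t
      apply degenerate_term_zero hvol t (Bfun G S₀ τ)
      unfold Bfun
      rw [hvol, div_zero, Real.log_zero]
      split <;> rfl
    rw [funext hA0, funext hB0, tsum_zero]
    constructor
    · norm_num
    · have := log_vol_univ_nonneg G
      linarith
  · -- main case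
    set U := Real.log (vol G Finset.univ) with hU
    have hUnn : 0 ≤ U := log_vol_univ_nonneg G
    have hPpartial : ∀ n : ℕ,
        ∑ t ∈ Finset.range n, EpathN (Khat G) S₀ t (Pfun τ t) ≤ 1 := by
      intro n
      cases n with
      | zero => simp
      | succ N =>
          have hm := mass_partition hτ h0 N
          have hQN := Q_nonneg (G := G) (S₀ := S₀) (τ := τ) N
          linarith [hm]
    have hPsum : Summable (fun t => EpathN (Khat G) S₀ t (Pfun τ t)) :=
      summable_of_sum_range_le (fun t => P_nonneg t) hPpartial
    have hPtsum : ∑' t, EpathN (Khat G) S₀ t (Pfun τ t) ≤ 1 :=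
      Summable.tsum_le_of_sum_range_le hPsum hPpartial
    have habsb : ∀ m, |EpathN (Khat G) S₀ m (Bfun G S₀ τ m)|
        ≤ U * EpathN (Khat G) S₀ m (Pfun τ m) := fun m => abs_b_le hτ h0 m
    have hbsum : Summable (fun m => EpathN (Khat G) S₀ m (Bfun G S₀ τ m)) :=
      Summable.of_abs (Summable.of_nonneg_of_le (fun m => abs_nonneg _) habsb
        (hPsum.mul_left U))
    have hkey : ∀ N : ℕ, ∑ t ∈ Finset.range N, EpathN (Khat G) S₀ t (Afun G τ t)
        ≤ 4 * ∑ m ∈ Finset.range (N+1), EpathN (Khat G) S₀ m (Bfun G S₀ τ m)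
          + 4 * EpathN (Khat G) S₀ N (Cfun G S₀ τ N) := by
      intro N
      have h1 := sum_A_le_L hτ h0 N
      have h2 := L_decomp hτ h0 N
      rw [h2] at h1
      linarith
    have hbpartial : ∀ n : ℕ,
        ∑ m ∈ Finset.range n, EpathN (Khat G) S₀ m (Bfun G S₀ τ m) ≤ U := by
      intro n
      calc ∑ m ∈ Finset.range n, EpathN (Khat G) S₀ m (Bfun G S₀ τ m)
          ≤ ∑ m ∈ Finset.range n, U * EpathN (Khat G) S₀ m (Pfun τ m) :=
            Finset.sum_le_sum fun m _ => le_trans (le_abs_self _) (habsb m)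
        _ = U * ∑ m ∈ Finset.range n, EpathN (Khat G) S₀ m (Pfun τ m) := by
            rw [Finset.mul_sum]
        _ ≤ U * 1 := mul_le_mul_of_nonneg_left (hPpartial n) hUnn
        _ = U := mul_one U
    have hcle : ∀ N, EpathN (Khat G) S₀ N (Cfun G S₀ τ N) ≤ U := by
      intro N
      calc EpathN (Khat G) S₀ N (Cfun G S₀ τ N)
          ≤ |EpathN (Khat G) S₀ N (Cfun G S₀ τ N)| := le_abs_self _
        _ ≤ U * EpathN (Khat G) S₀ N (Qfun τ N) := abs_c_le hτ h0 N
        _ ≤ U * 1 := mul_le_mul_of_nonneg_left (Q_le_one hτ h0 N) hUnn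
        _ = U := mul_one U
    have hAsum : Summable (fun t => EpathN (Khat G) S₀ t (Afun G τ t)) := by
      apply summable_of_sum_range_le (fun t => A_nonneg t) (c := 8 * U)
      intro n
      have h1 := hkey n
      have h2 := hbpartial (n+1)
      have h3 := hcle n
      linarith
    constructor
    · -- first inequality via limits
      have hlim1 : Filter.Tendsto
          (fun N => ∑ t ∈ Finset.range N, EpathN (Khat G) S₀ t (Afun G τ t))
          Filter.atTop (nhds (∑' t, EpathN (Khat G) S₀ t (Afun G τ t))) :=
        hAsum.hasSum.tendsto_sum_nat
      have hlimb : Filter.Tendsto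
          (fun N => ∑ m ∈ Finset.range (N+1), EpathN (Khat G) S₀ m (Bfun G S₀ τ m))
          Filter.atTop (nhds (∑' m, EpathN (Khat G) S₀ m (Bfun G S₀ τ m))) :=
        hbsum.hasSum.tendsto_sum_nat.comp (Filter.tendsto_add_atTop_nat 1)
      have hQ0 : Filter.Tendsto (fun N => EpathN (Khat G) S₀ N (Qfun τ N))
          Filter.atTop (nhds 0) := Q_tendsto_zero hτ h0
      have hlimc : Filter.Tendsto (fun N => EpathN (Khat G) S₀ N (Cfun G S₀ τ N))
          Filter.atTop (nhds 0) := by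
        apply squeeze_zero_norm (fun N => abs_c_le hτ h0 N)
        have := hQ0.const_mul U
        rw [mul_zero] at this
        exact this
      have hlim2 : Filter.Tendsto
          (fun N => 4 * ∑ m ∈ Finset.range (N+1), EpathN (Khat G) S₀ m (Bfun G S₀ τ m)
            + 4 * EpathN (Khat G) S₀ N (Cfun G S₀ τ N))
          Filter.atTop (nhds (4 * (∑' m, EpathN (Khat G) S₀ m (Bfun G S₀ τ m)) + 4 * 0)) :=
        Filter.Tendsto.add (hlimb.const_mul 4) (hlimc.const_mul 4)
      have hfin := le_of_tendsto_of_tendsto' hlim1 hlim2 hkey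
      rw [mul_zero, add_zero] at hfin
      exact hfin
    · -- second inequality
      have h1 : ∑' m, EpathN (Khat G) S₀ m (Bfun G S₀ τ m)
          ≤ ∑' m, U * EpathN (Khat G) S₀ m (Pfun τ m) :=
        Summable.tsum_le_tsum (fun m => le_trans (le_abs_self _) (habsb m)) hbsum (hPsum.mul_left U)
      have h2 : ∑' m, U * EpathN (Khat G) S₀ m (Pfun τ m)
          = U * ∑' m, EpathN (Khat G) S₀ m (Pfun τ m) := tsum_mul_left
      have h3 : U * ∑' m, EpathN (Khat G) S₀ m (Pfun τ m) ≤ U * 1 :=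
        mul_le_mul_of_nonneg_left hPtsum hUnn
      have h4 : (U : ℝ) * 1 = U := mul_one U
      linarith

end Final

/-- Lemma 4: for the volume-biased evolving set process started from a nonempty set `S₀`
and any stopping time `τ`,
`Ê_{S₀}[Σ_{j=0}^{τ-1} φ(S_j)²] ≤ 4 Ê_{S₀}[log(μ(S_τ)/μ(S₀))] ≤ 4 log μ(V)`. Both
expectations are written as sums over time of finite-horizon path expectations. -/
theorem statement9 (G : SimpleGraph V) [DecidableRel G.Adj]
    (S₀ : Finset V) (hS₀ : S₀.Nonempty)
    (τ : (ℕ → Finset V) → ℕ) (hτ : IsStopping τ) :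
    (∑' t : ℕ, EpathN (Khat G) S₀ t fun s => if t < τ s then phiCond G (s t) ^ 2 else 0) ≤
        4 * (∑' t : ℕ, EpathN (Khat G) S₀ t
          fun s => if τ s = t then Real.log (vol G (s t) / vol G S₀) else 0) ∧
      4 * (∑' t : ℕ, EpathN (Khat G) S₀ t
          fun s => if τ s = t then Real.log (vol G (s t) / vol G S₀) else 0) ≤
        4 * Real.log (vol G Finset.univ) := by
  exact statement9' G S₀ hS₀ τ hτ
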